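/- Conditional negative definiteness of |x| in one dimension: for any real numbers x₀,…,xₙ and any real coefficients v₀,…,vₙ with Σⱼ vⱼ = 0, one has Σⱼ Σₖ vⱼ vₖ |xⱼ − xₖ| ≤ 0. -/

import Mathlib

open MeasureTheory

theorem abs_conditionally_negative_definite (n : ℕ) (xs : Fin (n+1) → ℝ)
    (v : Fin (n+1) → ℝ) (hv : ∑ j, v j = 0) :
    ∑ j, ∑ k, v j * v k * |xs j - xs k| ≤ 0 := by
  obtain ⟨M, hM⟩ : ∃ M, ∀ j, xs j ≤ M :=
    ⟨Finset.univ.sup' ⟨0, Finset.mem_univ 0⟩ xs,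
      fun j => Finset.le_sup' xs (Finset.mem_univ j)⟩
  set g : Fin (n+1) → ℝ → ℝ := fun j => (Set.Ico (xs j) M).indicator 1 with hg
  have hprod : ∀ j k, (fun t => g j t * g k t)
      = (Set.Ico (max (xs j) (xs k)) M).indicator 1 := by
    intro j k
    funext t
    rw [hg, ← Set.inter_indicator_mul, Set.Ico_inter_Ico, min_self]
    congr 1; funext x; simp
  have hint : ∀ j k, Integrable (fun t => g j t * g k t) := by
    intro j k
    rw [hprod j k]
    rw [integrable_indicator_iff measurableSet_Ico]
    exact integrableOn_const (by simp [Real.volume_Ico])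
  have hI : ∀ j k, ∫ t, g j t * g k t = M - max (xs j) (xs k) := by
    intro j k
    rw [hprod j k, MeasureTheory.integral_indicator_one measurableSet_Ico,
      measureReal_def, Real.volume_Ico, ENNReal.toReal_ofReal]
    rcases le_total (M - max (xs j) (xs k)) 0 with h | h
    · have : max (xs j) (xs k) ≤ M := max_le (hM j) (hM k)
      linarith
    · exact h
  have hpos : 0 ≤ ∑ j, ∑ k, v j * v k * (M - max (xs j) (xs k)) := by
    have hexp : ∑ j, ∑ k, v j * v k * (M - max (xs j) (xs k))
        = ∫ t, (∑ j, v j * g j t)^2 := by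
      have : ∀ t, (∑ j, v j * g j t)^2 = ∑ j, ∑ k, (v j * v k) * (g j t * g k t) := by
        intro t
        rw [sq, Finset.sum_mul_sum]
        exact Finset.sum_congr rfl fun j _ => Finset.sum_congr rfl fun k _ => by ring
      simp only [this]
      rw [integral_finset_sum _ (fun j _ => ?_)]
      · refine Finset.sum_congr rfl fun j _ => ?_
        rw [integral_finset_sum _ (fun k _ => ((hint j k).const_mul _))]
        refine Finset.sum_congr rfl fun k _ => ?_
        rw [MeasureTheory.integral_const_mul, hI j k]
      · exact integrable_finset_sum _ (fun k _ => ((hint j k).const_mul _))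
    rw [hexp]
    exact integral_nonneg fun t => sq_nonneg _
  have habs : ∀ j k, |xs j - xs k|
      = 2*M - xs j - xs k - 2*(M - max (xs j) (xs k)) := by
    intro j k
    rcases le_total (xs j) (xs k) with h | h
    · rw [abs_of_nonpos (by linarith), max_eq_right h]; ring
    · rw [abs_of_nonneg (by linarith), max_eq_left h]; ring
  have h0 : ∑ j, ∑ k, v j * v k * (2*M - xs j - xs k) = 0 := by
    have h1 : ∀ j : Fin (n+1), ∑ k, v j * v k * (2*M - xs j - xs k)
        = v j * (2*M - xs j) * (∑ k, v k) - v j * ∑ k, v k * xs k := by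
      intro j
      rw [Finset.mul_sum, Finset.mul_sum, ← Finset.sum_sub_distrib]
      exact Finset.sum_congr rfl fun k _ => by ring
    simp only [h1, hv, mul_zero, zero_sub, Finset.sum_neg_distrib, ← Finset.sum_mul, hv,
      zero_mul, neg_zero]
  have hsplit : ∑ j, ∑ k, v j * v k * |xs j - xs k|
      = ∑ j, ∑ k, v j * v k * (2*M - xs j - xs k)
        - 2 * ∑ j, ∑ k, v j * v k * (M - max (xs j) (xs k)) := by
    rw [Finset.mul_sum, ← Finset.sum_sub_distrib]
    refine Finset.sum_congr rfl fun j _ => ?_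
    rw [Finset.mul_sum, ← Finset.sum_sub_distrib]
    refine Finset.sum_congr rfl fun k _ => ?_
    rw [habs j k]; ring
  rw [hsplit, h0]
  linarith
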